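/- (Elliptical potential count lemma) Let d ≥ 1, T ≥ 1, let x_1, …, x_T ∈ ℝ^d be vectors with ‖x_t‖₂ ≤ 1 for all t ∈ [T], and let λ > 0. Define H_T = { t ∈ [T] : ‖x_t‖²_{V_{t-1}(λ)⁻¹} > 1 }. Then the cardinality of H_T satisfies |H_T| ≤ (2d / log 2) · log(1 + 1/(λ · log 2)). -/

import Mathlib

open Matrix

lemma epc_psd_vecMulVec {d : ℕ} (v : Fin d → ℝ) : (Matrix.vecMulVec v v).PosSemidef := by
  have h := Matrix.posSemidef_self_mul_conjTranspose (Matrix.replicateCol Unit v)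
  rwa [Matrix.conjTranspose_replicateCol, star_trivial, ← Matrix.vecMulVec_eq] at h

lemma epc_trace_vecMulVec {d : ℕ} (v : Fin d → ℝ) :
    (Matrix.vecMulVec v v).trace = ∑ i, (v i)^2 := by
  simp [Matrix.trace, Matrix.diag, Matrix.vecMulVec_apply, sq]

open scoped MatrixOrder in
lemma epc_cs {d : ℕ} {A : Matrix (Fin d) (Fin d) ℝ} (hA : A.PosSemidef) (y z : Fin d → ℝ) :
    (y ⬝ᵥ A *ᵥ z)^2 ≤ (y ⬝ᵥ A *ᵥ y) * (z ⬝ᵥ A *ᵥ z) := by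
  set S := CFC.sqrt A with hS
  have hsym : Sᵀ = S := by
    have : Sᴴ = S := (CFC.sqrt_nonneg A).posSemidef.isHermitian
    simpa [Matrix.conjTranspose_eq_transpose_of_trivial] using this
  have key : ∀ u w : Fin d → ℝ, u ⬝ᵥ A *ᵥ w = (S *ᵥ u) ⬝ᵥ (S *ᵥ w) := by
    intro u w
    rw [← CFC.sqrt_mul_sqrt_self A hA.nonneg, ← Matrix.mulVec_mulVec, Matrix.dotProduct_mulVec u S,
      ← Matrix.mulVec_transpose, hsym]
  rw [key y z, key y y, key z z]
  simpa [dotProduct, sq] using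
    Finset.sum_mul_sq_le_sq_mul_sq Finset.univ (S *ᵥ y) (S *ᵥ z)

lemma epc_compare {d : ℕ} {A P : Matrix (Fin d) (Fin d) ℝ} (hA : A.PosDef) (hP : P.PosSemidef)
    (x : Fin d → ℝ) : x ⬝ᵥ (A + P)⁻¹ *ᵥ x ≤ x ⬝ᵥ A⁻¹ *ᵥ x := by
  have hB : (A + P).PosDef := hA.add_posSemidef hP
  set B := A + P with hBdef
  have hBu : IsUnit B.det := hB.det_pos.ne'.isUnit
  have hAu : IsUnit A.det := hA.det_pos.ne'.isUnit
  set z := B⁻¹ *ᵥ x with hz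
  set w := A⁻¹ *ᵥ x with hw
  have hBz : B *ᵥ z = x := by
    rw [hz, Matrix.mulVec_mulVec, Matrix.mul_nonsing_inv _ hBu, Matrix.one_mulVec]
  have hAw : A *ᵥ w = x := by
    rw [hw, Matrix.mulVec_mulVec, Matrix.mul_nonsing_inv _ hAu, Matrix.one_mulVec]
  set t := x ⬝ᵥ B⁻¹ *ᵥ x with ht
  have ht0 : 0 ≤ t := by
    have := hB.posSemidef.inv.dotProduct_mulVec_nonneg x
    simpa [ht, star_trivial] using this
  have hwAw : w ⬝ᵥ A *ᵥ w = x ⬝ᵥ A⁻¹ *ᵥ x := by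
    rw [hAw, dotProduct_comm]
  have hzx : z ⬝ᵥ x = t := by
    rw [ht, ← hz, dotProduct_comm]
  have hzAz_le : z ⬝ᵥ A *ᵥ z ≤ t := by
    have hPz : 0 ≤ z ⬝ᵥ P *ᵥ z := by simpa [star_trivial] using hP.dotProduct_mulVec_nonneg z
    have : z ⬝ᵥ B *ᵥ z = z ⬝ᵥ A *ᵥ z + z ⬝ᵥ P *ᵥ z := by
      simp [hBdef, Matrix.add_mulVec, dotProduct_add]
    have h2 : z ⬝ᵥ B *ᵥ z = t := by rw [hBz, hzx]
    linarith [this ▸ h2]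
  have hcs : t^2 ≤ (z ⬝ᵥ A *ᵥ z) * (x ⬝ᵥ A⁻¹ *ᵥ x) := by
    have := epc_cs hA.posSemidef z w
    rw [hwAw] at this
    rw [show z ⬝ᵥ A *ᵥ w = t by rw [hAw, hzx]] at this
    exact this
  have hAinv0 : 0 ≤ x ⬝ᵥ A⁻¹ *ᵥ x := by
    simpa [star_trivial] using hA.posSemidef.inv.dotProduct_mulVec_nonneg x
  rcases eq_or_lt_of_le ht0 with h0 | h0
  · rw [ht] at h0; linarith [h0, hAinv0]
  · have : t^2 ≤ t * (x ⬝ᵥ A⁻¹ *ᵥ x) := le_trans hcs (by nlinarith)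
    calc x ⬝ᵥ B⁻¹ *ᵥ x = t := rfl
      _ ≤ x ⬝ᵥ A⁻¹ *ᵥ x := by nlinarith

lemma epc_det_update {d : ℕ} {A : Matrix (Fin d) (Fin d) ℝ} (hA : A.PosDef) (v : Fin d → ℝ) :
    (A + Matrix.vecMulVec v v).det = A.det * (1 + v ⬝ᵥ A⁻¹ *ᵥ v) := by
  have hAu : IsUnit A.det := hA.det_pos.ne'.isUnit
  rw [Matrix.vecMulVec_eq Unit, Matrix.det_add_replicateCol_mul_replicateRow hAu]
  congr 1
  rw [Matrix.det_unique]
  have : Matrix.replicateRow Unit v * A⁻¹ * Matrix.replicateCol Unit v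
      = Matrix.replicateRow Unit v * Matrix.replicateCol Unit (A⁻¹ *ᵥ v) := by
    rw [Matrix.mul_assoc, Matrix.replicateCol_mulVec]
  rw [this]
  simp [Matrix.replicateRow_mul_replicateCol_apply]

lemma epc_det_le_trace {d : ℕ} (hd : 1 ≤ d) {A : Matrix (Fin d) (Fin d) ℝ}
    (hA : A.PosSemidef) : A.det ≤ (A.trace / d) ^ d := by
  have hH := hA.isHermitian
  have hev : ∀ i, 0 ≤ hH.eigenvalues i := hA.eigenvalues_nonneg
  have hdet : A.det = ∏ i, hH.eigenvalues i := by
    simpa using hH.det_eq_prod_eigenvalues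
  have htr : A.trace = ∑ i, hH.eigenvalues i := by
    simpa using hH.trace_eq_sum_eigenvalues
  have hd0 : (d : ℝ) ≠ 0 := by positivity
  have amgm : ∏ i, (hH.eigenvalues i) ^ ((1:ℝ)/d) ≤ ∑ i, (1/(d:ℝ)) * hH.eigenvalues i := by
    apply Real.geom_mean_le_arith_mean_weighted
    · intro i _; positivity
    · simp [Finset.sum_const]; field_simp
    · intro i _; exact hev i
  have hsum : ∑ i, (1/(d:ℝ)) * hH.eigenvalues i = A.trace / d := by
    rw [htr, Finset.sum_div]; exact Finset.sum_congr rfl fun i _ => by ring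
  have hLHS : (∏ i, (hH.eigenvalues i) ^ ((1:ℝ)/d)) ^ d = ∏ i, hH.eigenvalues i := by
    rw [← Finset.prod_pow]
    congr 1; funext i
    rw [← Real.rpow_natCast ((hH.eigenvalues i) ^ ((1:ℝ)/d)) d, ← Real.rpow_mul (hev i)]
    field_simp
    simp
  have h0 : 0 ≤ ∏ i, (hH.eigenvalues i) ^ ((1:ℝ)/d) :=
    Finset.prod_nonneg fun i _ => Real.rpow_nonneg (hev i) _
  calc A.det = (∏ i, (hH.eigenvalues i) ^ ((1:ℝ)/d)) ^ d := by rw [hLHS, hdet]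
    _ ≤ (∑ i, (1/(d:ℝ)) * hH.eigenvalues i) ^ d := pow_le_pow_left₀ h0 amgm d
    _ = (A.trace / d) ^ d := by rw [hsum]

lemma epc_scalar {w L : ℝ} (hw : 0 ≤ w) (hL : 0 ≤ L)
    (h : w ≤ Real.log (1 + w * (Real.exp L - 1))) : w ≤ 2 * L := by
  by_contra hc
  push_neg at hc
  have hw0 : 0 < w := lt_of_le_of_lt (by linarith) hc
  have hLlt : L < w / 2 := by linarith
  have h1 : Real.exp L - 1 ≤ Real.exp (w/2) - 1 := by
    have := Real.exp_le_exp.mpr hLlt.le; linarith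
  have h2 : w ≤ Real.log (1 + w * (Real.exp (w/2) - 1)) := by
    refine h.trans (Real.log_le_log (by nlinarith [Real.exp_pos L, Real.one_le_exp hL]) ?_)
    nlinarith
  have hpos : (0:ℝ) < 1 + w * (Real.exp (w/2) - 1) := by
    nlinarith [Real.one_le_exp (by positivity : (0:ℝ) ≤ w/2)]
  have h3 : Real.exp w ≤ 1 + w * (Real.exp (w/2) - 1) := by
    have := Real.exp_le_exp.mpr h2
    rwa [Real.exp_log hpos] at this
  set s := Real.exp (w/2) with hs
  have hsq : Real.exp w = s^2 := by
    rw [hs, sq, ← Real.exp_add]; ring_nf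
  have hs1 : 1 < s := by
    rw [hs]
    simpa using Real.exp_lt_exp.mpr (by positivity : (0:ℝ) < w/2)
  have hq : 1 + w/4 ≤ Real.exp (w/4) := by linarith [Real.add_one_le_exp (w/4)]
  have hquarter : (1 + w/4)^2 ≤ s := by
    have hsqq : s = (Real.exp (w/4))^2 := by rw [hs, sq, ← Real.exp_add]; ring_nf
    rw [hsqq]
    exact pow_le_pow_left₀ (by positivity) hq 2
  nlinarith [sq_nonneg (w - 4), hsq ▸ h3]

set_option maxHeartbeats 1000000 in
/-- Elliptical potential count lemma. -/
theorem elliptical_potential_count (d T : ℕ) (hd : 1 ≤ d) (hT : 1 ≤ T)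
    (x : ℕ → Fin d → ℝ)
    (hx : ∀ t ∈ Finset.Icc 1 T, Real.sqrt (∑ i, (x t i) ^ 2) ≤ 1)
    (lam : ℝ) (hlam : 0 < lam)
    (V : ℕ → Matrix (Fin d) (Fin d) ℝ)
    (hV : ∀ k, V k = lam • (1 : Matrix (Fin d) (Fin d) ℝ)
        + ∑ s ∈ Finset.Icc 1 k, Matrix.vecMulVec (x s) (x s))
    (H : Finset ℕ)
    (hH : ∀ t, t ∈ H ↔ t ∈ Finset.Icc 1 T ∧ 1 < x t ⬝ᵥ (V (t - 1))⁻¹ *ᵥ x t) :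
    (H.card : ℝ) ≤ (2 * d / Real.log 2) * Real.log (1 + 1 / (lam * Real.log 2)) := by
  classical
  have hlog2 : 0 < Real.log 2 := Real.log_pos (by norm_num)
  set L := Real.log (1 + 1 / (lam * Real.log 2)) with hLdef
  have hL0 : 0 ≤ L := Real.log_nonneg (by nlinarith [one_div_pos.mpr (mul_pos hlam hlog2)])
  set v : ℕ → Matrix (Fin d) (Fin d) ℝ := fun s => Matrix.vecMulVec (x s) (x s) with hv
  set M : Finset ℕ → Matrix (Fin d) (Fin d) ℝ :=
    fun S => lam • (1 : Matrix (Fin d) (Fin d) ℝ) + ∑ s ∈ S, v s with hM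
  have hone : (lam • (1 : Matrix (Fin d) (Fin d) ℝ)).PosDef := by
    rw [Matrix.smul_one_eq_diagonal]
    exact Matrix.PosDef.diagonal (fun _ => hlam)
  have hpsdsum : ∀ S : Finset ℕ, (∑ s ∈ S, v s).PosSemidef := by
    intro S
    induction S using Finset.induction with
    | empty => simpa using Matrix.PosSemidef.zero
    | insert _ _ h ih => rw [Finset.sum_insert h]; exact (epc_psd_vecMulVec _).add ih
  have hMPD : ∀ S, (M S).PosDef := fun S => hone.add_posSemidef (hpsdsum S)
  have hdet1 : (lam • (1 : Matrix (Fin d) (Fin d) ℝ)).det = lam ^ d := by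
    rw [Matrix.det_smul, Matrix.det_one]; simp
  have hVdec : ∀ t, V t = M ((Finset.Icc 1 t).filter (· ∈ H))
      + ∑ s ∈ (Finset.Icc 1 t).filter (fun s => ¬ s ∈ H), v s := by
    intro t
    rw [hV t]
    simp only [hM]
    rw [← Finset.sum_filter_add_sum_filter_not (Finset.Icc 1 t) (· ∈ H) v, add_assoc]
  have key : ∀ t : ℕ, lam ^ d * 2 ^ ((Finset.Icc 1 t).filter (· ∈ H)).card
      ≤ (M ((Finset.Icc 1 t).filter (· ∈ H))).det := by
    intro t
    induction t with
    | zero =>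
      rw [Finset.Icc_eq_empty (by omega)]
      simp only [Finset.filter_empty, Finset.card_empty, pow_zero, mul_one, hM,
        Finset.sum_empty, add_zero]
      rw [hdet1]
    | succ t ih =>
      by_cases ht : (t+1) ∈ H
      · have hnotmem : (t+1) ∉ Finset.Icc 1 t := by simp
        have hsetx : (Finset.Icc 1 (t+1)).filter (· ∈ H)
            = insert (t+1) ((Finset.Icc 1 t).filter (· ∈ H)) := by
          rw [← Finset.insert_Icc_right_eq_Icc_add_one (by omega), Finset.filter_insert, if_pos ht]
        set S := (Finset.Icc 1 t).filter (· ∈ H) with hSdef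
        have hnm : (t+1) ∉ S := fun h => hnotmem (Finset.mem_filter.mp h).1
        have hMins : M (insert (t+1) S) = M S + v (t+1) := by
          simp only [hM]
          rw [Finset.sum_insert hnm]
          abel
        have hdot : 1 < x (t+1) ⬝ᵥ (M S)⁻¹ *ᵥ x (t+1) := by
          have h1 := ((hH (t+1)).mp ht).2
          simp only [Nat.add_sub_cancel] at h1
          have h2 : x (t+1) ⬝ᵥ (V t)⁻¹ *ᵥ x (t+1) ≤ x (t+1) ⬝ᵥ (M S)⁻¹ *ᵥ x (t+1) := by
            rw [hVdec t]
            exact epc_compare (hMPD S) (hpsdsum _) _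
          linarith
        have hdet := epc_det_update (hMPD S) (x (t+1))
        have hpos := (hMPD S).det_pos
        rw [hsetx, Finset.card_insert_of_notMem hnm]
        calc lam^d * 2^(S.card+1) = (lam^d * 2^S.card) * 2 := by ring
          _ ≤ (M S).det * 2 := by
              have h2 : (0:ℝ) ≤ 2 := by norm_num
              exact mul_le_mul_of_nonneg_right ih h2
          _ ≤ (M S).det * (1 + x (t+1) ⬝ᵥ (M S)⁻¹ *ᵥ x (t+1)) := by nlinarith
          _ = (M (insert (t+1) S)).det := by rw [hMins]; exact hdet.symm
      · have hset : (Finset.Icc 1 (t+1)).filter (· ∈ H) = (Finset.Icc 1 t).filter (· ∈ H) := by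
          rw [← Finset.insert_Icc_right_eq_Icc_add_one (by omega), Finset.filter_insert, if_neg ht]
        rw [hset]
        exact ih
  have hHeq : (Finset.Icc 1 T).filter (· ∈ H) = H := by
    ext t
    simp only [Finset.mem_filter]
    exact ⟨fun h => h.2, fun h => ⟨((hH t).mp h).1, h⟩⟩
  have hmain : lam ^ d * 2 ^ H.card ≤ (M H).det := by
    have := key T
    rwa [hHeq] at this
  set n := H.card with hn
  have hd0 : (0:ℝ) < d := by exact_mod_cast Nat.lt_of_lt_of_le Nat.zero_lt_one hd
  have htr_eq : (M H).trace = lam * d + ∑ s ∈ H, ∑ i, (x s i)^2 := by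
    simp only [hM]
    rw [Matrix.trace_add, Matrix.trace_smul, Matrix.trace_one, Matrix.trace_sum]
    congr 1
    · simp [smul_eq_mul]
    · exact Finset.sum_congr rfl fun s _ => epc_trace_vecMulVec _
  have hsq_le : ∀ s ∈ H, ∑ i, (x s i)^2 ≤ 1 := by
    intro s hs
    have hmem := ((hH s).mp hs).1
    have h1 := hx s hmem
    have h2 : (0:ℝ) ≤ ∑ i, (x s i)^2 := by positivity
    nlinarith [Real.sq_sqrt h2, Real.sqrt_nonneg (∑ i, (x s i)^2)]
  have htrace : (M H).trace ≤ lam * d + n := by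
    rw [htr_eq]
    have h1 : ∑ s ∈ H, ∑ i, (x s i)^2 ≤ ∑ s ∈ H, (1:ℝ) := Finset.sum_le_sum hsq_le
    have h2 : ∑ s ∈ H, (1:ℝ) = (n:ℝ) := by simp [hn]
    linarith
  have htrace0 : 0 ≤ (M H).trace := by
    rw [htr_eq]
    have : (0:ℝ) ≤ ∑ s ∈ H, ∑ i, (x s i)^2 :=
      Finset.sum_nonneg fun s _ => by positivity
    nlinarith
  have hub : (M H).det ≤ (lam + n/d)^d := by
    refine (epc_det_le_trace hd (hMPD H).posSemidef).trans ?_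
    apply pow_le_pow_left₀ (by positivity)
    rw [div_le_iff₀ hd0]
    have : (lam + n/d) * d = lam * d + n := by field_simp
    rw [this]
    exact htrace
  have hchain : lam^d * 2^n ≤ (lam + n/d)^d := hmain.trans hub
  have hlamn : (0:ℝ) < lam + n/d := by positivity
  have hlog := Real.log_le_log (by positivity) hchain
  rw [Real.log_mul (by positivity) (by positivity), Real.log_pow, Real.log_pow, Real.log_pow] at hlog
  have hlogrhs : Real.log ((lam + (n:ℝ)/d)) = Real.log lam + Real.log (1 + n/(lam*d)) := by
    rw [← Real.log_mul hlam.ne' (by positivity)]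
    congr 1
    field_simp
  rw [hlogrhs] at hlog
  have hmid : (n:ℝ) * Real.log 2 ≤ d * Real.log (1 + n/(lam*d)) := by
    push_cast at hlog ⊢
    nlinarith [hlog]
  set w := (n:ℝ) * Real.log 2 / d with hw
  have hexp : Real.exp L = 1 + 1/(lam * Real.log 2) := Real.exp_log (by positivity)
  have harg : 1 + (n:ℝ)/(lam*d) = 1 + w * (Real.exp L - 1) := by
    rw [hexp, hw]
    field_simp
    ring
  have hscal : w ≤ Real.log (1 + w * (Real.exp L - 1)) := by
    rw [← harg, hw, div_le_iff₀ hd0]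
    calc (n:ℝ) * Real.log 2 ≤ d * Real.log (1 + n/(lam*d)) := hmid
      _ = Real.log (1 + n/(lam*d)) * d := by ring
  have hw0 : 0 ≤ w := by
    rw [hw]
    positivity
  have hfin := epc_scalar hw0 hL0 hscal
  rw [hw, div_le_iff₀ hd0] at hfin
  rw [div_mul_eq_mul_div, le_div_iff₀ hlog2]
  nlinarith [hfin]
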